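/- The vector space C = HH_0(𝒜, ω^∨⊗ω) carries a well-defined coassociative counital k-coalgebra structure in which the counit ε : C → k sends [φ⊗v] to φ(v), and the comultiplication Δ : C → C ⊗_k C sends [φ⊗v] (with φ ∈ ω(X)^∨, v ∈ ω(X)) to Σ_i [φ⊗e_i] ⊗ [e_i^∨⊗v], where (e_i) is any basis of ω(X) with dual basis (e_i^∨). In particular ε and Δ are well defined on the quotient, Δ is independent of the choices of bases, (Δ⊗id)∘Δ = (id⊗Δ)∘Δ, and (ε⊗id)∘Δ = id = (id⊗ε)∘Δ. -/

import Mathlib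

/-!
STATEMENT 0: For a small `k`-linear category `𝒜` and a `k`-linear functor
`ω : 𝒜 → Vect_k` with finite-dimensional values, the vector space
`C = HH₀(𝒜, ω^∨ ⊗ ω)` (the quotient of `⨁_X ω(X)^∨ ⊗ ω(X)` by the span of the
elements `(φ∘ω(f)) ⊗ v − φ ⊗ ω(f)(v)`) carries a well-defined coassociative
counital `k`-coalgebra structure where `ε [φ⊗v] = φ(v)` and
`Δ [φ⊗v] = Σᵢ [φ⊗eᵢ] ⊗ [eᵢ^∨⊗v]` for any basis `(eᵢ)` of `ω(X)`.
-/

open CategoryTheory TensorProduct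

noncomputable section

namespace Tannaka

variable (k : Type) [Field k] (A : Type) [SmallCategory A] [DecidableEq A]
  [Preadditive A] [CategoryTheory.Linear k A]
variable (ω : A ⥤ ModuleCat k) [ω.Additive] [Functor.Linear k ω]

/-- The direct sum `⨁_{X ∈ Ob 𝒜} ω(X)^∨ ⊗ ω(X)`. -/
abbrev HH0pre : Type := DirectSum A (fun X => Module.Dual k (ω.obj X) ⊗[k] ω.obj X)

instance : AddCommGroup (HH0pre k A ω) :=
  @DFinsupp.addCommGroup A (fun X => Module.Dual k (ω.obj X) ⊗[k] ω.obj X) (fun _ => inferInstance)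

/-- The subspace spanned by the elements `(φ∘ω(f))⊗v − φ⊗ω(f)(v)` for
`f : X ⟶ Y`, `φ ∈ ω(Y)^∨`, `v ∈ ω(X)`. -/
def HH0rel : Submodule k (HH0pre k A ω) :=
  Submodule.span k
    { z | ∃ (X Y : A) (f : X ⟶ Y) (φ : Module.Dual k (ω.obj Y)) (v : ω.obj X),
        z = DirectSum.lof k A (fun X => Module.Dual k (ω.obj X) ⊗[k] ω.obj X) X
              ((φ ∘ₗ (ω.map f).hom) ⊗ₜ[k] v)
          - DirectSum.lof k A (fun X => Module.Dual k (ω.obj X) ⊗[k] ω.obj X) Y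
              (φ ⊗ₜ[k] (ω.map f v)) }

/-- `C = HH₀(𝒜, ω^∨ ⊗ ω)`. -/
abbrev HH0 : Type := HH0pre k A ω ⧸ HH0rel k A ω

/-- The class `[φ ⊗ v]` of `φ ⊗ v`, `φ ∈ ω(X)^∨`, `v ∈ ω(X)`, in `HH₀`. -/
def cls (X : A) (φ : Module.Dual k (ω.obj X)) (v : ω.obj X) : HH0 k A ω :=
  Submodule.Quotient.mk
    (DirectSum.lof k A (fun X => Module.Dual k (ω.obj X) ⊗[k] ω.obj X) X (φ ⊗ₜ[k] v))


section Aux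

set_option linter.unusedSectionVars false

/-- The canonical map `ω(X)^∨ ⊗ ω(X) → C`. -/
def clsT (X : A) : (Module.Dual k (ω.obj X) ⊗[k] ω.obj X) →ₗ[k] HH0 k A ω :=
  (HH0rel k A ω).mkQ ∘ₗ DirectSum.lof k A (fun X => Module.Dual k (ω.obj X) ⊗[k] ω.obj X) X

lemma cls_eq_clsT (X : A) (φ : Module.Dual k (ω.obj X)) (v : ω.obj X) :
    cls k A ω X φ v = clsT k A ω X (φ ⊗ₜ[k] v) := rfl

lemma cls_rel {X Y : A} (f : X ⟶ Y) (φ : Module.Dual k (ω.obj Y)) (v : ω.obj X) :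
    cls k A ω X (φ ∘ₗ (ω.map f).hom) v = cls k A ω Y φ (ω.map f v) := by
  unfold cls
  rw [Submodule.Quotient.eq]
  exact Submodule.subset_span ⟨X, Y, f, φ, v, rfl⟩

/-- The canonical element `Σᵢ eᵢ^∨ ⊗ eᵢ` of `ω(X)^∨ ⊗ ω(X)`. -/
def eta (X : A) [FiniteDimensional k (ω.obj X)] : Module.Dual k (ω.obj X) ⊗[k] ω.obj X :=
  (dualTensorHomEquiv k (ω.obj X) (ω.obj X)).symm LinearMap.id

lemma eta_eq (X : A) [FiniteDimensional k (ω.obj X)] (ι : Type) [Fintype ι]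
    (b : Module.Basis ι k (ω.obj X)) :
    eta k A ω X = ∑ i : ι, (b.coord i) ⊗ₜ[k] (b i) := by
  apply (dualTensorHomEquiv k (ω.obj X) (ω.obj X)).injective
  rw [eta, LinearEquiv.apply_symm_apply]
  simp only [dualTensorHomEquiv, dualTensorHomEquivOfBasis_apply, map_sum,
    dualTensorHom_apply]
  ext x
  simp [Module.Basis.coord_apply, Module.Basis.sum_repr]

/-- The comultiplication on one summand, as a bilinear map. -/
def delta0bil (X : A) [FiniteDimensional k (ω.obj X)] :
    Module.Dual k (ω.obj X) →ₗ[k] ω.obj X →ₗ[k] (HH0 k A ω ⊗[k] HH0 k A ω) :=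
  LinearMap.mk₂ k
    (fun φ v =>
      TensorProduct.map
        ((clsT k A ω X) ∘ₗ TensorProduct.mk k (Module.Dual k (ω.obj X)) (ω.obj X) φ)
        ((clsT k A ω X) ∘ₗ (TensorProduct.mk k (Module.Dual k (ω.obj X)) (ω.obj X)).flip v)
        ((TensorProduct.comm k _ _) (eta k A ω X)))
    (fun φ φ' v => by
      simp only [map_add, LinearMap.comp_add, TensorProduct.map_add_left,
        LinearMap.add_apply])
    (fun c φ v => by
      simp only [map_smul, LinearMap.comp_smul, TensorProduct.map_smul_left,
        LinearMap.smul_apply])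
    (fun φ v v' => by
      simp only [map_add, LinearMap.comp_add, TensorProduct.map_add_right,
        LinearMap.add_apply])
    (fun c φ v => by
      simp only [map_smul, LinearMap.comp_smul, TensorProduct.map_smul_right,
        LinearMap.smul_apply])

lemma delta0bil_apply (X : A) [FiniteDimensional k (ω.obj X)] (ι : Type) [Fintype ι]
    (b : Module.Basis ι k (ω.obj X)) (φ : Module.Dual k (ω.obj X)) (v : ω.obj X) :
    delta0bil k A ω X φ v =
      ∑ i : ι, (cls k A ω X φ (b i)) ⊗ₜ[k] (cls k A ω X (b.coord i) v) := by
  simp only [delta0bil, LinearMap.mk₂_apply, eta_eq k A ω X ι b, map_sum,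
    TensorProduct.comm_tmul, TensorProduct.map_tmul, LinearMap.comp_apply,
    TensorProduct.mk_apply, LinearMap.flip_apply]
  rfl

/-- Extensionality for linear maps out of `HH0`. -/
lemma hh0_ext {M : Type} [AddCommGroup M] [Module k M] {F G : HH0 k A ω →ₗ[k] M}
    (h : ∀ (X : A) (φ : Module.Dual k (ω.obj X)) (v : ω.obj X),
      F (cls k A ω X φ v) = G (cls k A ω X φ v)) : F = G := by
  apply Submodule.linearMap_qext
  apply DirectSum.linearMap_ext
  intro X
  apply TensorProduct.ext'
  intro φ v
  exact h X φ v

/-- The counit on the direct sum. -/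
def epsPre : HH0pre k A ω →ₗ[k] k :=
  DirectSum.toModule k A k (fun X =>
    TensorProduct.lift (LinearMap.id : Module.Dual k (ω.obj X) →ₗ[k] (ω.obj X →ₗ[k] k)))

lemma epsPre_rel : HH0rel k A ω ≤ LinearMap.ker (epsPre k A ω) := by
  refine Submodule.span_le.mpr ?_
  rintro z ⟨X, Y, f, φ, v, rfl⟩
  simp [epsPre, LinearMap.mem_ker, DirectSum.toModule_lof]

/-- The comultiplication on the direct sum. -/
def deltaPre [∀ X : A, FiniteDimensional k (ω.obj X)] :
    HH0pre k A ω →ₗ[k] (HH0 k A ω ⊗[k] HH0 k A ω) :=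
  DirectSum.toModule k A _ (fun X => TensorProduct.lift (delta0bil k A ω X))

lemma deltaPre_rel [∀ X : A, FiniteDimensional k (ω.obj X)] :
    HH0rel k A ω ≤ LinearMap.ker (deltaPre k A ω) := by
  refine Submodule.span_le.mpr ?_
  rintro z ⟨X, Y, f, φ, v, rfl⟩
  simp only [SetLike.mem_coe, LinearMap.mem_ker, map_sub, deltaPre,
    DirectSum.toModule_lof, TensorProduct.lift.tmul, sub_eq_zero]
  let b := Module.finBasis k (ω.obj X)
  let c := Module.finBasis k (ω.obj Y)
  rw [delta0bil_apply k A ω X _ b, delta0bil_apply k A ω Y _ c]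
  have key : ∀ i, cls k A ω X (φ ∘ₗ (ω.map f).hom) (b i) = cls k A ω Y φ (ω.map f (b i)) :=
    fun i => cls_rel k A ω f φ (b i)
  calc
    ∑ i, (cls k A ω X (φ ∘ₗ (ω.map f).hom) (b i)) ⊗ₜ[k] (cls k A ω X (b.coord i) v)
        = ∑ i, (cls k A ω Y φ (ω.map f (b i))) ⊗ₜ[k] (cls k A ω X (b.coord i) v) := by
          simp_rw [key]
    _ = ∑ i, ∑ j, (c.coord j (ω.map f (b i))) •
          ((cls k A ω Y φ (c j)) ⊗ₜ[k] (cls k A ω X (b.coord i) v)) := by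
          refine Finset.sum_congr rfl fun i _ => ?_
          conv_lhs => rw [← Module.Basis.sum_repr c (ω.map f (b i))]
          simp only [cls_eq_clsT, TensorProduct.tmul_sum, TensorProduct.sum_tmul, map_sum,
            ← TensorProduct.smul_tmul', map_smul, TensorProduct.tmul_smul, Module.Basis.coord_apply]
    _ = ∑ j, ∑ i, (c.coord j (ω.map f (b i))) •
          ((cls k A ω Y φ (c j)) ⊗ₜ[k] (cls k A ω X (b.coord i) v)) := Finset.sum_comm
    _ = ∑ j, (cls k A ω Y φ (c j)) ⊗ₜ[k] (cls k A ω X (c.coord j ∘ₗ (ω.map f).hom) v) := by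
          refine Finset.sum_congr rfl fun j _ => ?_
          conv_rhs => rw [← Module.Basis.sum_dual_apply_smul_coord b (c.coord j ∘ₗ (ω.map f).hom)]
          simp only [cls_eq_clsT, TensorProduct.tmul_sum, TensorProduct.sum_tmul, map_sum,
            ← TensorProduct.smul_tmul', map_smul, TensorProduct.tmul_smul,
            LinearMap.coe_comp, Function.comp_apply]
    _ = ∑ j, (cls k A ω Y φ (c j)) ⊗ₜ[k] (cls k A ω Y (c.coord j) (ω.map f v)) := by
          simp_rw [cls_rel k A ω f _ v]

end Aux

set_option maxHeartbeats 1000000 in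
set_option synthInstance.maxHeartbeats 400000 in
theorem HH0_coalgebra_structure
    [∀ X : A, FiniteDimensional k (ω.obj X)] :
    ∃ (ε : HH0 k A ω →ₗ[k] k) (Δ : HH0 k A ω →ₗ[k] (HH0 k A ω ⊗[k] HH0 k A ω)),
      -- ε is well defined on the quotient and is given by evaluation
      (∀ (X : A) (φ : Module.Dual k (ω.obj X)) (v : ω.obj X),
        ε (cls k A ω X φ v) = φ v) ∧
      -- Δ is well defined on the quotient, and is given by the stated formula
      -- for ANY choice of basis (in particular it is independent of this choice)
      (∀ (X : A) (ι : Type) [Fintype ι] (b : Module.Basis ι k (ω.obj X))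
          (φ : Module.Dual k (ω.obj X)) (v : ω.obj X),
        Δ (cls k A ω X φ v) =
          ∑ i : ι, (cls k A ω X φ (b i)) ⊗ₜ[k] (cls k A ω X (b.coord i) v)) ∧
      -- coassociativity
      ((TensorProduct.assoc k _ _ _).toLinearMap ∘ₗ
          (TensorProduct.map Δ LinearMap.id) ∘ₗ Δ =
        (TensorProduct.map LinearMap.id Δ) ∘ₗ Δ) ∧
      -- counit laws
      ((TensorProduct.lid k (HH0 k A ω)).toLinearMap ∘ₗ
          (TensorProduct.map ε LinearMap.id) ∘ₗ Δ = LinearMap.id) ∧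
      ((TensorProduct.rid k (HH0 k A ω)).toLinearMap ∘ₗ
          (TensorProduct.map LinearMap.id ε) ∘ₗ Δ = LinearMap.id) := by
  set ε := (HH0rel k A ω).liftQ (epsPre k A ω) (epsPre_rel k A ω) with hε_def
  set Δ := (HH0rel k A ω).liftQ (deltaPre k A ω) (deltaPre_rel k A ω) with hΔ_def
  have hε : ∀ (X : A) (φ : Module.Dual k (ω.obj X)) (v : ω.obj X),
      ε (cls k A ω X φ v) = φ v := by
    intro X φ v
    simp [hε_def, cls, Submodule.liftQ_apply, epsPre, DirectSum.toModule_lof]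
  have hΔ : ∀ (X : A) (ι : Type) (_ : Fintype ι) (b : Module.Basis ι k (ω.obj X))
      (φ : Module.Dual k (ω.obj X)) (v : ω.obj X),
      Δ (cls k A ω X φ v) =
        ∑ i : ι, (cls k A ω X φ (b i)) ⊗ₜ[k] (cls k A ω X (b.coord i) v) := by
    intro X ι _ b φ v
    rw [hΔ_def, cls, Submodule.liftQ_apply, deltaPre, DirectSum.toModule_lof,
      TensorProduct.lift.tmul, delta0bil_apply k A ω X ι b]
  refine ⟨ε, Δ, hε, fun X ι _ b φ v => hΔ X ι _ b φ v, ?_, ?_, ?_⟩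
  · apply hh0_ext k A ω
    intro X φ v
    let b := Module.finBasis k (ω.obj X)
    simp only [LinearMap.coe_comp, Function.comp_apply, LinearEquiv.coe_coe]
    rw [hΔ X _ inferInstance b φ v]
    simp only [map_sum, TensorProduct.map_tmul, LinearMap.id_apply]
    simp_rw [hΔ X _ inferInstance b]
    simp only [TensorProduct.sum_tmul, TensorProduct.tmul_sum, map_sum,
      TensorProduct.assoc_tmul]
    exact Finset.sum_comm
  · apply hh0_ext k A ω
    intro X φ v
    let b := Module.finBasis k (ω.obj X)
    simp only [LinearMap.coe_comp, Function.comp_apply, LinearEquiv.coe_coe,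
      LinearMap.id_apply]
    rw [hΔ X _ inferInstance b φ v]
    simp only [map_sum, TensorProduct.map_tmul, LinearMap.id_apply, hε,
      TensorProduct.lid_tmul]
    rw [cls_eq_clsT]
    simp_rw [cls_eq_clsT, ← map_smul, TensorProduct.smul_tmul']
    rw [← map_sum, ← TensorProduct.sum_tmul, Module.Basis.sum_dual_apply_smul_coord]
  · apply hh0_ext k A ω
    intro X φ v
    let b := Module.finBasis k (ω.obj X)
    simp only [LinearMap.coe_comp, Function.comp_apply, LinearEquiv.coe_coe,
      LinearMap.id_apply]
    rw [hΔ X _ inferInstance b φ v]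
    simp only [map_sum, TensorProduct.map_tmul, LinearMap.id_apply, hε,
      TensorProduct.rid_tmul]
    rw [cls_eq_clsT]
    simp_rw [cls_eq_clsT, ← map_smul, ← TensorProduct.tmul_smul]
    rw [← map_sum, ← TensorProduct.tmul_sum]
    simp_rw [Module.Basis.coord_apply]
    rw [Module.Basis.sum_repr]

end Tannaka
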